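/- Let E be a finite-dimensional real inner product space, F : E → ℝ differentiable with F ≥ 0, λ ≥ 0, and w* ∈ E. Suppose F is λ-linearizable with respect to w*, i.e. F(u) ≤ λ⟨∇F(u), u − w*⟩ for every u ∈ E. Then every gradient-flow trajectory w : [0,∞) → E of F satisfies, for every t > 0, F(w(t)) ≤ λ·(‖w(0) − w*‖² − ‖w(t) − w*‖²) / (2t). -/

import Mathlib

open RealInnerProductSpace

/-- λ-linearizability implies the corresponding convergence rate for gradient flow. -/
theorem linearizable_implies_gradient_flow_rate
    {E : Type*} [NormedAddCommGroup E] [InnerProductSpace ℝ E] [FiniteDimensional ℝ E]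
    (F : E → ℝ) (hF : Differentiable ℝ F) (hFnonneg : ∀ u, 0 ≤ F u)
    (lam : ℝ) (hlam : 0 ≤ lam) (wstar : E)
    (hlin : ∀ u : E, F u ≤ lam * ⟪gradient F u, u - wstar⟫)
    (w : ℝ → E)
    (hw : ∀ t : ℝ, 0 ≤ t → HasDerivAt w (-gradient F (w t)) t) :
    ∀ t : ℝ, 0 < t →
      F (w t) ≤ lam * (‖w 0 - wstar‖ ^ 2 - ‖w t - wstar‖ ^ 2) / (2 * t) := by
  intro t ht
  -- h s = s * F (w s) + lam * ⟪w s - wstar, w s - wstar⟫ / 2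
  set h : ℝ → ℝ := fun s => s * F (w s) + lam * ⟪w s - wstar, w s - wstar⟫ / 2 with hh
  have key : ∀ s : ℝ, 0 ≤ s → HasDerivAt h
      (F (w s) + s * ⟪gradient F (w s), -gradient F (w s)⟫
        + lam * (⟪w s - wstar, -gradient F (w s)⟫ + ⟪-gradient F (w s), w s - wstar⟫) / 2) s := by
    intro s hs
    have hws := hw s hs
    have h1 : HasDerivAt (fun u : ℝ => F (w u))
        ⟪gradient F (w s), -gradient F (w s)⟫ s := by
      have := ((hF (w s)).hasGradientAt.hasFDerivAt).comp_hasDerivAt s hws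
      simpa only [InnerProductSpace.toDual_apply_apply, Function.comp_def] using this
    have h2 : HasDerivAt (fun u : ℝ => w u - wstar) (-gradient F (w s)) s := by
      simpa using hws.sub_const wstar
    have h3 : HasDerivAt (fun u : ℝ => ⟪w u - wstar, w u - wstar⟫)
        (⟪w s - wstar, -gradient F (w s)⟫ + ⟪-gradient F (w s), w s - wstar⟫) s :=
      h2.inner ℝ h2
    have := ((hasDerivAt_id s).mul h1).add ((h3.const_mul lam).div_const 2)
    refine this.congr_deriv ?_
    simp
  have hderiv_nonpos : ∀ s ∈ Set.Ioo (0:ℝ) t, deriv h s ≤ 0 := by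
    intro s hs
    have hs0 : (0:ℝ) ≤ s := le_of_lt hs.1
    have hd := key s hs0
    rw [hd.deriv]
    have e1 : ⟪gradient F (w s), -gradient F (w s)⟫ = -‖gradient F (w s)‖^2 := by
      rw [inner_neg_right, real_inner_self_eq_norm_sq]
    have e2 : ⟪w s - wstar, -gradient F (w s)⟫ + ⟪-gradient F (w s), w s - wstar⟫
        = -(2 * ⟪gradient F (w s), w s - wstar⟫) := by
      rw [inner_neg_right, inner_neg_left, real_inner_comm (w s - wstar)]
      ring
    rw [e1, e2]
    have h4 := hlin (w s)
    nlinarith [sq_nonneg ‖gradient F (w s)‖, mul_nonneg hs0 (sq_nonneg ‖gradient F (w s)‖)]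
  have hcont : ContinuousOn h (Set.Icc 0 t) := fun s hs =>
    (key s hs.1).continuousAt.continuousWithinAt
  have hanti : AntitoneOn h (Set.Icc 0 t) := by
    apply antitoneOn_of_deriv_nonpos (convex_Icc 0 t) hcont
    · intro s hs
      rw [interior_Icc] at hs
      exact (key s hs.1.le).differentiableAt.differentiableWithinAt
    · intro s hs
      rw [interior_Icc] at hs
      exact hderiv_nonpos s hs
  have hle : h t ≤ h 0 := hanti (Set.left_mem_Icc.mpr ht.le) (Set.right_mem_Icc.mpr ht.le) ht.le
  simp only [hh] at hle
  rw [real_inner_self_eq_norm_sq, real_inner_self_eq_norm_sq] at hle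
  rw [le_div_iff₀ (by positivity : (0:ℝ) < 2 * t)]
  nlinarith [hle]
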